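/- Let A be a dimensionally nilpotent Lie triple non-nil algebra of dimension n+1 with adapted basis {e_0,…,e_n} (so d(e_i) = e_{i+1} for i < n, d(e_n) = 0, and e_0 is an idempotent or pseudo-idempotent with e_0e_1 = ½e_1). Then e_0 e_n = λ_n e_n for some scalar λ_n, and e_k e_n = 0 for all 1 ≤ k ≤ n. -/

import Mathlib

/-- In a dimensionally nilpotent Lie triple non-nil algebra with adapted basis
{e_0,…,e_n} (e_0 an idempotent or pseudo-idempotent, e_0e_1 = ½e_1, and the
radical span{e_1,…,e_n} nilpotent), one has e_0e_n = λ_n e_n for some scalar λ_n,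
and e_k e_n = 0 for 1 ≤ k ≤ n. -/
theorem top_basis_products {K A : Type*} [Field K]
    [NonUnitalNonAssocCommRing A] [Module K A] [SMulCommClass K A A] [IsScalarTower K A A]
    (h2 : (2 : K) ≠ 0) (h3 : (3 : K) ≠ 0)
    (n : ℕ) (hn : 1 ≤ n)
    (e : Module.Basis (Fin (n + 1)) K A)
    (hLT : ∀ x y : A, 2 • (x * (x * (x * y))) + y * (x * (x * x)) = 3 • (x * (y * (x * x))))
    (d : Module.End K A) (hd : ∀ x y : A, d (x * y) = d x * y + x * d y)
    (hadapt : ∀ i : Fin (n + 1), ∀ hi : (i : ℕ) < n,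
      d (e i) = e ⟨(i : ℕ) + 1, Nat.succ_lt_succ hi⟩)
    (hdtop : d (e ⟨n, Nat.lt_succ_self n⟩) = 0)
    (hidem : e 0 * e 0 = e 0 ∨ ∃ t : A, t ≠ 0 ∧ e 0 * e 0 = e 0 + t ∧
      e 0 * t = (2 : K)⁻¹ • t ∧ t * t = 0)
    (h01 : e 0 * e ⟨1, Nat.lt_succ_of_le hn⟩ = (2 : K)⁻¹ • e ⟨1, Nat.lt_succ_of_le hn⟩)
    (hnil : ∀ x ∈ Submodule.span K (Set.range fun i : Fin n => e i.succ),
      ∃ m : ℕ, ∀ y : A, (fun z => x * z)^[m] y = 0) :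
    (∃ lam : K, e 0 * e ⟨n, Nat.lt_succ_self n⟩ = lam • e ⟨n, Nat.lt_succ_self n⟩) ∧
    ∀ k : Fin (n + 1), 1 ≤ (k : ℕ) → e k * e ⟨n, Nat.lt_succ_self n⟩ = 0 := by
  -- Notation: E is the top basis vector e_n
  have hlast : (Fin.last n) = (⟨n, Nat.lt_succ_self n⟩ : Fin (n+1)) := rfl
  set E : A := e ⟨n, Nat.lt_succ_self n⟩ with hE
  -- Kernel of d is K • E
  have hker : ∀ v : A, d v = 0 → ∃ c : K, v = c • E := by
    intro v hv
    have hrepr := e.sum_repr v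
    have hdv : d v = ∑ j : Fin n, e.repr v j.castSucc • e j.succ := by
      conv_lhs => rw [← hrepr]
      rw [map_sum, Fin.sum_univ_castSucc]
      have h0 : d (e.repr v (Fin.last n) • e (Fin.last n)) = 0 := by
        rw [map_smul, hlast, hdtop, smul_zero]
      rw [h0, add_zero]
      refine Finset.sum_congr rfl ?_
      intro j _
      rw [map_smul, hadapt j.castSucc (by simp)]
      congr 2
    have hli : LinearIndependent K (fun j : Fin n => e j.succ) :=
      e.linearIndependent.comp Fin.succ (Fin.succ_injective n)
    have hz : ∀ j : Fin n, e.repr v j.castSucc = 0 := by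
      have hzero : ∑ j : Fin n, e.repr v j.castSucc • e j.succ = 0 := by
        rw [← hdv]; exact hv
      intro j
      exact linearIndependent_iff'.mp hli Finset.univ
        (fun j => e.repr v j.castSucc) hzero j (Finset.mem_univ j)
    refine ⟨e.repr v (Fin.last n), ?_⟩
    conv_lhs => rw [← hrepr]
    rw [Fin.sum_univ_castSucc]
    simp [hz, hlast, hE]
  -- E is nonzero
  have hEne : E ≠ 0 := e.ne_zero _
  -- eigenvalue of a nilpotent multiplication is zero
  have hnil' : ∀ x ∈ Submodule.span K (Set.range fun i : Fin n => e i.succ),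
      ∀ c : K, x * E = c • E → c = 0 := by
    intro x hx c hxc
    obtain ⟨m, hm⟩ := hnil x hx
    have hiter : ∀ m' : ℕ, (fun z => x * z)^[m'] E = c ^ m' • E := by
      intro m'
      induction m' with
      | zero => simp
      | succ k ih =>
        rw [Function.iterate_succ_apply', ih, mul_smul_comm, hxc, smul_smul, ← pow_succ]
    have hmz := hm E
    rw [hiter m] at hmz
    have hc : c ^ m = 0 := by
      rcases smul_eq_zero.mp hmz with h | h
      · exact h
      · exact absurd h hEne
    by_cases hm0 : m = 0
    · rw [hm0, pow_zero] at hc; exact absurd hc one_ne_zero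
    · exact pow_eq_zero_iff hm0 |>.mp hc
  -- basis vectors with index ≥ 1 lie in the radical span
  have hmem : ∀ k : Fin (n+1), 1 ≤ (k : ℕ) →
      e k ∈ Submodule.span K (Set.range fun i : Fin n => e i.succ) := by
    intro k hk
    apply Submodule.subset_span
    refine ⟨⟨(k : ℕ) - 1, by omega⟩, ?_⟩
    show e (Fin.succ ⟨(k : ℕ) - 1, by omega⟩) = e k
    congr 1
    ext
    simp [Fin.succ]
    omega
  -- main downward induction
  have key : ∀ i : ℕ, ∀ k : Fin (n+1), 1 ≤ (k : ℕ) → n - (k : ℕ) ≤ i → e k * E = 0 := by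
    intro i
    induction i with
    | zero =>
      intro k hk1 hkn
      have hkval : (k : ℕ) = n := by have := k.isLt; omega
      have hkE : e k = E := by rw [hE]; congr 1; exact Fin.ext hkval
      have hdz : d (e k * E) = 0 := by
        rw [hd, hkE, hdtop, zero_mul, mul_zero, add_zero]
      obtain ⟨c, hc⟩ := hker _ hdz
      rw [hc, hnil' (e k) (hmem k hk1) c (by rw [← hc]), zero_smul]
    | succ i ih =>
      intro k hk1 hkn
      by_cases hkn' : (k : ℕ) = n
      · have hkE : e k = E := by rw [hE]; congr 1; exact Fin.ext hkn'
        have hdz : d (e k * E) = 0 := by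
          rw [hd, hkE, hdtop, zero_mul, mul_zero, add_zero]
        obtain ⟨c, hc⟩ := hker _ hdz
        rw [hc, hnil' (e k) (hmem k hk1) c (by rw [← hc]), zero_smul]
      · have hklt : (k : ℕ) < n := by have := k.isLt; omega
        have hsucc : e ⟨(k : ℕ) + 1, Nat.succ_lt_succ hklt⟩ * E = 0 := by
          refine ih ⟨(k : ℕ) + 1, Nat.succ_lt_succ hklt⟩ ?_ ?_
          · exact Nat.succ_le_succ (Nat.zero_le _)
          · show n - ((k : ℕ) + 1) ≤ i; omega
        have hdz : d (e k * E) = 0 := by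
          rw [hd, hdtop, mul_zero, add_zero, hadapt k hklt, hsucc]
        obtain ⟨c, hc⟩ := hker _ hdz
        rw [hc, hnil' (e k) (hmem k hk1) c (by rw [← hc]), zero_smul]
  constructor
  · have h1 : e ⟨1, Nat.lt_succ_of_le hn⟩ * E = 0 := by
      refine key n ⟨1, Nat.lt_succ_of_le hn⟩ le_rfl ?_
      show n - 1 ≤ n; omega
    have hd0 : d (e 0) = e ⟨1, Nat.lt_succ_of_le hn⟩ := by
      rw [hadapt 0 (by simp; omega)]
      congr 1
    have hdz : d (e 0 * E) = 0 := by
      rw [hd, hdtop, mul_zero, add_zero, hd0, h1]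
    exact hker _ hdz
  · intro k hk
    exact key n k hk (by omega)
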